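/- Let F be a field, K a quadratic field extension of F, and G(x_1,...,x_n) a homogeneous polynomial of degree 3 with coefficients in F. If G has a nonzero solution in K^n, then G has a nonzero solution in F^n. -/

import Mathlib

open Polynomial

private lemma coeff_prod_sum {F ι : Type*} [CommSemiring F] (s : Finset ι)
    (f : ι → Polynomial F) (d : ι → ℕ) (h : ∀ i ∈ s, (f i).natDegree ≤ d i) :
    (∏ i ∈ s, f i).coeff (∑ i ∈ s, d i) = ∏ i ∈ s, (f i).coeff (d i) := by
  classical
  induction s using Finset.induction with
  | empty => simp
  | insert j s hni ih =>
    rw [Finset.prod_insert hni, Finset.sum_insert hni, Finset.prod_insert hni,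
      Polynomial.coeff_mul_add_eq_of_natDegree_le (h j (Finset.mem_insert_self _ _))
        ((Polynomial.natDegree_prod_le _ _).trans
          (Finset.sum_le_sum fun i hi => h i (Finset.mem_insert_of_mem hi))),
      ih fun i hi => h i (Finset.mem_insert_of_mem hi)]

private lemma degree_of_mem {n d : ℕ} {F : Type*} [CommSemiring F]
    {G : MvPolynomial (Fin n) F} (hG : G.IsHomogeneous d) {m : Fin n →₀ ℕ}
    (hm : m ∈ G.support) : ∑ i ∈ m.support, m i = d := by
  have := hG (MvPolynomial.mem_support_iff.mp hm)
  simpa [Finsupp.weight_apply, Finsupp.sum] using this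

private lemma key_deg {n : ℕ} {F : Type*} [CommSemiring F]
    (G : MvPolynomial (Fin n) F) (hG : G.IsHomogeneous 3) (a b : Fin n → F) :
    (MvPolynomial.aeval (fun i => Polynomial.C (a i) + Polynomial.C (b i) * Polynomial.X) G).natDegree ≤ 3 ∧
    (MvPolynomial.aeval (fun i => Polynomial.C (a i) + Polynomial.C (b i) * Polynomial.X) G).coeff 3
      = MvPolynomial.eval b G := by
  classical
  set pf : Fin n → Polynomial F := fun i => Polynomial.C (a i) + Polynomial.C (b i) * Polynomial.X with hpf
  have hpfd : ∀ i, (pf i).natDegree ≤ 1 := by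
    intro i
    have h : pf i = Polynomial.C (b i) * Polynomial.X + Polynomial.C (a i) := add_comm _ _
    rw [h]
    exact Polynomial.natDegree_linear_le
  have hpow : ∀ (m : Fin n →₀ ℕ) (i : Fin n), (pf i ^ m i).natDegree ≤ m i := fun m i =>
    (Polynomial.natDegree_pow_le).trans (by simpa using Nat.mul_le_mul_left (m i) (hpfd i))
  constructor
  · conv_lhs => rw [G.as_sum]
    rw [map_sum]
    apply Polynomial.natDegree_sum_le_of_forall_le
    intro m hm
    rw [MvPolynomial.aeval_monomial]
    apply (Polynomial.natDegree_mul_le).trans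
    have : ((m.prod fun i k => pf i ^ k)).natDegree ≤ 3 := by
      rw [Finsupp.prod]
      apply (Polynomial.natDegree_prod_le _ _).trans
      calc ∑ i ∈ m.support, (pf i ^ m i).natDegree
          ≤ ∑ i ∈ m.support, m i := Finset.sum_le_sum fun i _ => hpow m i
        _ = 3 := degree_of_mem hG hm
    simpa using this
  · conv_lhs => rw [G.as_sum]
    rw [map_sum, Polynomial.finset_sum_coeff, MvPolynomial.eval_eq]
    apply Finset.sum_congr rfl
    intro m hm
    rw [MvPolynomial.aeval_monomial]
    have halg : (algebraMap F (Polynomial F)) (MvPolynomial.coeff m G)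
        = Polynomial.C (MvPolynomial.coeff m G) := rfl
    rw [halg, Polynomial.coeff_C_mul, Finsupp.prod]
    congr 1
    have h3 := degree_of_mem hG hm
    rw [← h3, coeff_prod_sum _ _ _ (fun i _ => hpow m i)]
    apply Finset.prod_congr rfl
    intro i hi
    have hc : (pf i ^ m i).coeff (m i * 1) = ((pf i).coeff 1) ^ m i :=
      Polynomial.coeff_pow_of_natDegree_le (hpfd i)
    rw [mul_one] at hc
    rw [hc]
    congr 1
    simp [hpf]

private lemma eval_scale {n d : ℕ} {R : Type*} [CommSemiring R]
    {G : MvPolynomial (Fin n) R} (hG : G.IsHomogeneous d) (c : R) (v : Fin n → R) :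
    MvPolynomial.eval (fun i => c * v i) G = c ^ d * MvPolynomial.eval v G := by
  rw [MvPolynomial.eval_eq, MvPolynomial.eval_eq, Finset.mul_sum]
  apply Finset.sum_congr rfl
  intro m hm
  have h3 : ∑ i ∈ m.support, m i = d := degree_of_mem hG hm
  simp_rw [mul_pow]
  rw [Finset.prod_mul_distrib, Finset.prod_pow_eq_pow_sum, h3]
  ring

theorem cubic_form_descends_quadratic_ext
    (F K : Type*) [Field F] [Field K] [Algebra F K]
    (h2 : Module.finrank F K = 2)
    (n : ℕ) (G : MvPolynomial (Fin n) F) (hG : G.IsHomogeneous 3)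
    (x : Fin n → K) (hx : x ≠ 0) (hxsol : MvPolynomial.aeval x G = 0) :
    ∃ y : Fin n → F, y ≠ 0 ∧ MvPolynomial.eval y G = 0 := by
  classical
  have hFD : FiniteDimensional F K := Module.finite_of_finrank_pos (by omega)
  have hAinj : Function.Injective (algebraMap F K) := (algebraMap F K).injective
  -- general fact: applying an F-algebra map after aeval
  have haux : ∀ (y : Fin n → F) (H : MvPolynomial (Fin n) F),
      MvPolynomial.aeval (fun i => algebraMap F K (y i)) H
        = algebraMap F K (MvPolynomial.eval y H) := by
    intro y H
    have h := congrArg (fun φ : MvPolynomial (Fin n) F →ₐ[F] K => φ H)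
      (MvPolynomial.comp_aeval y (Algebra.ofId F K))
    simp only [AlgHom.comp_apply, Algebra.ofId_apply] at h
    have h2' : MvPolynomial.aeval y H = MvPolynomial.eval y H := by
      rw [← MvPolynomial.coe_aeval_eq_eval]; rfl
    rw [← h, h2']
  -- get θ not in the image of F
  have hbt : (⊥ : Subalgebra F K) ≠ ⊤ := by
    rw [Ne, Subalgebra.bot_eq_top_iff_finrank_eq_one, h2]; omega
  obtain ⟨θ, hθ'⟩ : ∃ θ : K, θ ∉ (⊥ : Subalgebra F K) := by
    by_contra h
    push_neg at h
    exact hbt (by ext z; simpa using h z)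
  have hθ : θ ∉ Set.range (algebraMap F K) := fun hr => hθ' (Algebra.mem_bot.mpr hr)
  -- {1, θ} is a basis
  have li : LinearIndependent F ![1, θ] := by
    rw [LinearIndependent.pair_iff]
    intro s t hst
    by_cases ht : t = 0
    · subst ht
      simp only [smul_eq_mul, zero_smul, add_zero, smul_eq_zero, one_ne_zero, or_false] at hst
      simpa using hst
    · exfalso
      apply hθ
      refine ⟨-(t⁻¹ * s), ?_⟩
      have h1 : t • θ = -(s • (1 : K)) := eq_neg_of_add_eq_zero_right hst
      have h2' : θ = (-(t⁻¹ * s)) • (1 : K) := by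
        calc θ = t⁻¹ • (t • θ) := by rw [inv_smul_smul₀ ht]
          _ = t⁻¹ • (-(s • (1:K))) := by rw [h1]
          _ = (-(t⁻¹ * s)) • (1 : K) := by rw [smul_neg, smul_smul, neg_smul]
      rw [h2', Algebra.smul_def, mul_one]
  let B : Module.Basis (Fin 2) F K := basisOfLinearIndependentOfCardEqFinrank li (by simp [h2])
  have hB : ⇑B = ![1, θ] := coe_basisOfLinearIndependentOfCardEqFinrank _ _
  set a : Fin n → F := fun i => B.repr (x i) 0 with ha
  set b : Fin n → F := fun i => B.repr (x i) 1 with hb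
  have hdec : ∀ i, x i = algebraMap F K (a i) + algebraMap F K (b i) * θ := by
    intro i
    have hs := B.sum_repr (x i)
    rw [Fin.sum_univ_two] at hs
    rw [hB] at hs
    simp only [Matrix.cons_val_zero, Matrix.cons_val_one, Matrix.head_cons] at hs
    rw [← hs, Algebra.smul_def, Algebra.smul_def, mul_one]
  -- case b = 0
  by_cases hbz : b = 0
  · refine ⟨a, ?_, ?_⟩
    · intro haz
      apply hx
      funext i
      rw [hdec i, show a i = 0 from congrFun haz i, show b i = 0 from congrFun hbz i]
      simp
    · have hxa : x = fun i => algebraMap F K (a i) := by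
        funext i
        rw [hdec i, show b i = 0 from congrFun hbz i]
        simp
      apply hAinj
      rw [map_zero, ← hxsol, hxa, haux]
  -- case b ≠ 0
  by_cases hb3 : MvPolynomial.eval b G = 0
  · exact ⟨b, hbz, hb3⟩
  -- main case: eval b G ≠ 0
  set pf : Fin n → Polynomial F := fun i => Polynomial.C (a i) + Polynomial.C (b i) * Polynomial.X with hpf
  set g : Polynomial F := MvPolynomial.aeval pf G with hgdef
  obtain ⟨hgdeg, hgc3⟩ := key_deg G hG a b
  rw [show (MvPolynomial.aeval fun i => Polynomial.C (a i) + Polynomial.C (b i) * Polynomial.X) G = g from rfl] at hgdeg hgc3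
  have hgθ : Polynomial.aeval θ g = 0 := by
    have h := congrArg (fun φ : MvPolynomial (Fin n) F →ₐ[F] K => φ G)
      (MvPolynomial.comp_aeval pf (Polynomial.aeval θ))
    simp only [AlgHom.comp_apply] at h
    have hxeq : (fun i => Polynomial.aeval θ (pf i)) = x := by
      funext i
      rw [hpf]
      simp only [map_add, map_mul, Polynomial.aeval_C, Polynomial.aeval_X]
      exact (hdec i).symm
    rw [hgdef, h, hxeq, hxsol]
  have hg0 : g ≠ 0 := fun h => hb3 (by rw [← hgc3, h, Polynomial.coeff_zero])
  have hgdeg3 : g.natDegree = 3 :=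
    le_antisymm hgdeg (Polynomial.le_natDegree_of_ne_zero (hgc3 ▸ hb3))
  -- minimal polynomial of θ
  have hint : IsIntegral F θ := IsIntegral.of_finite F θ
  have hm2 : (minpoly F θ).natDegree = 2 := by
    have hle := minpoly.natDegree_le (A := F) θ
    rw [h2] at hle
    have hge := (minpoly.two_le_natDegree_iff hint).mpr (by
      intro hmem
      exact hθ (by rwa [RingHom.mem_range] at hmem))
    omega
  obtain ⟨l, hl⟩ : minpoly F θ ∣ g := minpoly.dvd F θ hgθ
  have hmne : minpoly F θ ≠ 0 := minpoly.ne_zero hint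
  have hlne : l ≠ 0 := fun h => hg0 (by rw [hl, h, mul_zero])
  have hldeg : l.natDegree = 1 := by
    have := Polynomial.natDegree_mul hmne hlne
    rw [← hl, hgdeg3, hm2] at this
    omega
  -- root of l
  have hc1 : l.coeff 1 ≠ 0 := by
    intro h
    apply hlne
    apply Polynomial.leadingCoeff_eq_zero.mp
    rw [Polynomial.leadingCoeff, hldeg]
    exact h
  set t0 : F := -(l.coeff 0) / (l.coeff 1) with ht0
  have hlt0 : l.eval t0 = 0 := by
    conv_lhs => rw [Polynomial.eq_X_add_C_of_natDegree_le_one (le_of_eq hldeg)]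
    simp only [Polynomial.eval_add, Polynomial.eval_mul, Polynomial.eval_C, Polynomial.eval_X]
    rw [ht0]
    field_simp
    ring
  have hgt0 : g.eval t0 = 0 := by
    rw [hl, Polynomial.eval_mul, hlt0, mul_zero]
  -- candidate solution
  set y : Fin n → F := fun i => a i + b i * t0 with hy
  have hyG : MvPolynomial.eval y G = 0 := by
    have h := congrArg (fun φ : MvPolynomial (Fin n) F →ₐ[F] F => φ G)
      (MvPolynomial.comp_aeval pf (Polynomial.aeval t0))
    simp only [AlgHom.comp_apply] at h
    have h1 : (fun i => Polynomial.aeval t0 (pf i)) = y := by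
      funext i
      rw [hpf]
      simp [hy]
    have h2' : Polynomial.aeval t0 g = g.eval t0 := by
      rw [← Polynomial.coe_aeval_eq_eval]
    have h3 : MvPolynomial.aeval y G = MvPolynomial.eval y G := by
      rw [← MvPolynomial.coe_aeval_eq_eval]; rfl
    rw [← h3, ← h1, ← h, ← hgdef, h2', hgt0]
  by_cases hyz : y = 0
  · -- then x = (θ - t0) • (algebraMap ∘ b), contradiction with eval b G ≠ 0
    exfalso
    have hxeq : ∀ i, x i = (θ - algebraMap F K t0) * algebraMap F K (b i) := by
      intro i
      have hai : a i = -(b i * t0) := by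
        have := congrFun hyz i
        simp only [hy, Pi.zero_apply] at this
        linear_combination this
      rw [hdec i, hai]
      push_cast [map_neg, map_mul]
      ring
    have hGK : (MvPolynomial.map (algebraMap F K) G).IsHomogeneous 3 := hG.map _
    have haeq : MvPolynomial.aeval x G
        = MvPolynomial.eval x (MvPolynomial.map (algebraMap F K) G) := by
      rw [MvPolynomial.aeval_def, MvPolynomial.eval₂_eq_eval_map]
    have hxfun : x = fun i => (θ - algebraMap F K t0) * algebraMap F K (b i) := funext hxeq
    have := eval_scale hGK (θ - algebraMap F K t0) (fun i => algebraMap F K (b i))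
    rw [haeq, hxfun] at hxsol
    rw [hxsol] at this
    have hθt0 : θ - algebraMap F K t0 ≠ 0 := by
      intro h
      exact hθ ⟨t0, by linear_combination -h⟩
    have hevb : MvPolynomial.eval (fun i => algebraMap F K (b i))
        (MvPolynomial.map (algebraMap F K) G) = algebraMap F K (MvPolynomial.eval b G) := by
      rw [← haux b G, MvPolynomial.aeval_def, MvPolynomial.eval₂_eq_eval_map]
    rw [hevb] at this
    have := (mul_eq_zero.mp this.symm).resolve_left (pow_ne_zero 3 hθt0)
    exact hb3 (hAinj (by rw [this, map_zero]))
  · exact ⟨y, hyz, hyG⟩
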